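/- Let G=(V,E) be a countably infinite, locally finite simple graph and let v₁,v₂,… be a bijective enumeration of V such that, for some real numbers α ≥ 1 and β ≥ 0 and all N ∈ ℕ, #∂_E({v₁,…,v_N}) ≤ β + α·min{#∂_E(A) : A ⊆ V, #A = N}. Then for every finitely supported f : V → ℝ_{≥0}, the rearrangement f* associated to this enumeration satisfies ‖∇f*‖_{L¹} ≤ α·‖∇f‖_{L¹} + β·‖f‖_{L^∞}. -/

import Mathlib

open Real

/-- The edge boundary of a set `A`: the edges of `G` with exactly one endpoint in `A`. -/
def edgeBoundary {V : Type*} (G : SimpleGraph V) (A : Set V) : Set (Sym2 V) :=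
  {e | e ∈ G.edgeSet ∧ ∃ u w : V, e = s(u, w) ∧ u ∈ A ∧ w ∉ A}

/-- The vertex boundary of `A`: vertices outside `A` adjacent to some vertex of `A`. -/
def vertexBoundary {V : Type*} (G : SimpleGraph V) (A : Set V) : Set V :=
  {u | u ∉ A ∧ ∃ w ∈ A, G.Adj u w}

/-- The vertex-isoperimetric profile `∂_V(N)`. -/
noncomputable def vertexProfile {V : Type*} (G : SimpleGraph V) (N : ℕ) : ℕ :=
  sInf {k : ℕ | ∃ A : Set V, A.Finite ∧ A.ncard = N ∧ (vertexBoundary G A).ncard = k}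

/-- `‖∇f‖_{L¹} = ∑_{{u,w} ∈ E} |f u - f w|`. -/
noncomputable def gradL1 {V : Type*} (G : SimpleGraph V) (f : V → ℝ) : ℝ :=
  ∑' e : G.edgeSet,
    Sym2.lift ⟨fun u w => |f u - f w|, fun u w => by dsimp only; rw [abs_sub_comm]⟩ e.1

/-- `‖∇f‖_{L^∞} = sup_{{u,w} ∈ E} |f u - f w|`. -/
noncomputable def gradLinf {V : Type*} (G : SimpleGraph V) (f : V → ℝ) : ℝ :=
  ⨆ e : G.edgeSet,
    Sym2.lift ⟨fun u w => |f u - f w|, fun u w => by dsimp only; rw [abs_sub_comm]⟩ e.1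

/-- `‖∇f‖_{L^p} = (∑_{{u,w} ∈ E} |f u - f w|^p)^(1/p)` for real `p`. -/
noncomputable def gradLp {V : Type*} (G : SimpleGraph V) (f : V → ℝ) (p : ℝ) : ℝ :=
  (∑' e : G.edgeSet,
    Sym2.lift ⟨fun u w => |f u - f w| ^ p,
      fun u w => by dsimp only; rw [abs_sub_comm]⟩ e.1) ^ (1 / p)

/-- `‖∇f‖_{L²} = (∑_{{u,w} ∈ E} |f u - f w|²)^(1/2)`. -/
noncomputable def gradL2 {V : Type*} (G : SimpleGraph V) (f : V → ℝ) : ℝ :=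
  Real.sqrt (∑' e : G.edgeSet,
    Sym2.lift ⟨fun u w => |f u - f w| ^ 2,
      fun u w => by dsimp only; rw [abs_sub_comm]⟩ e.1)

/-- `g` is the rearrangement of `f` along the enumeration `v` (with `v 0 = v₁`):
`g` is obtained from `f` by permuting its values, and the values of `g` are
non-increasing along the enumeration. -/
def IsRearrangement {V : Type*} (v : ℕ → V) (f g : V → ℝ) : Prop :=
  (∃ σ : Equiv.Perm V, g = f ∘ σ) ∧ ∀ m n : ℕ, m ≤ n → g (v n) ≤ g (v m)

/-- The grid graph `(ℤ², ℓ¹)`. -/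
def gridGraph : SimpleGraph (ℤ × ℤ) where
  Adj p q := |p.1 - q.1| + |p.2 - q.2| = 1
  symm := by
    constructor
    intro p q h
    show |q.1 - p.1| + |q.2 - p.2| = 1
    change |p.1 - q.1| + |p.2 - q.2| = 1 at h
    rw [abs_sub_comm q.1 p.1, abs_sub_comm q.2 p.2]
    exact h
  loopless := by constructor; intro p h; simp at h

/-- One step of the counterclockwise square spiral on `ℤ²`. -/
def spiralNext : ℤ × ℤ → ℤ × ℤ := fun p =>
  if 1 ≤ p.1 ∧ p.2 = -p.1 then (p.1 + 1, p.2)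
  else if 1 ≤ p.1 ∧ -p.1 ≤ p.2 ∧ p.2 < p.1 then (p.1, p.2 + 1)
  else if 1 ≤ p.2 ∧ -p.2 < p.1 ∧ p.1 ≤ p.2 then (p.1 - 1, p.2)
  else if p.1 ≤ -1 ∧ p.1 < p.2 ∧ p.2 ≤ -p.1 then (p.1, p.2 - 1)
  else (p.1 + 1, p.2)

/-- The spiral enumeration of `ℤ²`, 0-indexed: `spiral 0 = v₁ = (0,0)`,
`spiral 1 = v₂ = (1,0)`, `spiral 2 = v₃ = (1,1)`, `spiral 3 = v₄ = (0,1)`, … -/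
def spiral (n : ℕ) : ℤ × ℤ := spiralNext^[n] (0, 0)

private lemma aux_ptwise_half (tN : ℕ → ℝ) (m : ℕ)
    (hmono : ∀ ⦃i j : ℕ⦄, i < j → j < m → tN i < tN j)
    {a b : ℝ} (ha : ∃ i, i < m ∧ tN i = a) (hb : ∃ i, i < m ∧ tN i = b)
    (hba : b ≤ a) :
    a - b = ∑ j ∈ Finset.range (m - 1),
      (tN (j+1) - tN j) *
        |(if tN (j+1) ≤ a then (1:ℝ) else 0) - (if tN (j+1) ≤ b then (1:ℝ) else 0)| := by
  classical
  obtain ⟨k, hk, rfl⟩ := ha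
  obtain ⟨i, hi, rfl⟩ := hb
  have hik : i ≤ k := by
    by_contra h
    push_neg at h
    exact absurd (hmono h hi) (not_lt.mpr hba)
  have hsum : ∀ j ∈ Finset.range (m-1),
      (tN (j+1) - tN j) *
        |(if tN (j+1) ≤ tN k then (1:ℝ) else 0) - (if tN (j+1) ≤ tN i then (1:ℝ) else 0)|
      = if j ∈ Finset.Ico i k then tN (j+1) - tN j else 0 := by
    intro j hj
    have hj1 : j + 1 < m := by
      have := Finset.mem_range.mp hj; omega
    have hak : tN (j+1) ≤ tN k ↔ j + 1 ≤ k := by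
      constructor
      · intro h; by_contra hc; push_neg at hc
        exact absurd (hmono hc hj1) (not_lt.mpr h)
      · intro h
        rcases h.lt_or_eq with h' | h'
        · exact (hmono h' hk).le
        · rw [h']
    have hai : tN (j+1) ≤ tN i ↔ j + 1 ≤ i := by
      constructor
      · intro h; by_contra hc; push_neg at hc
        exact absurd (hmono hc hj1) (not_lt.mpr h)
      · intro h
        rcases h.lt_or_eq with h' | h'
        · exact (hmono h' hi).le
        · rw [h']
    rcases Nat.lt_or_ge j i with hji | hji
    · have h2 : j+1 ≤ i := hji
      have h1 : j+1 ≤ k := le_trans h2 hik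
      rw [if_pos (hak.mpr h1), if_pos (hai.mpr h2),
        if_neg (by simp only [Finset.mem_Ico]; omega)]
      simp
    · rcases Nat.lt_or_ge j k with hjk | hjk
      · have h1 : j+1 ≤ k := hjk
        have h2 : ¬ j+1 ≤ i := by omega
        rw [if_pos (hak.mpr h1), if_neg (fun h => h2 (hai.mp h)),
          if_pos (by simp only [Finset.mem_Ico]; exact ⟨hji, hjk⟩)]
        simp
      · have h1 : ¬ j+1 ≤ k := by omega
        have h2 : ¬ j+1 ≤ i := by omega
        rw [if_neg (fun h => h1 (hak.mp h)), if_neg (fun h => h2 (hai.mp h)),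
          if_neg (by simp only [Finset.mem_Ico]; omega)]
        simp
  rw [Finset.sum_congr rfl hsum, Finset.sum_ite_mem]
  have hsub : Finset.Ico i k ⊆ Finset.range (m-1) := by
    intro j hj
    simp only [Finset.mem_Ico] at hj
    simp only [Finset.mem_range]
    omega
  rw [Finset.inter_eq_right.mpr hsub, Finset.sum_Ico_eq_sub _ hik,
    Finset.sum_range_sub tN k, Finset.sum_range_sub tN i]
  ring

private lemma aux_ptwise (tN : ℕ → ℝ) (m : ℕ)
    (hmono : ∀ ⦃i j : ℕ⦄, i < j → j < m → tN i < tN j)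
    {a b : ℝ} (ha : ∃ i, i < m ∧ tN i = a) (hb : ∃ i, i < m ∧ tN i = b) :
    |a - b| = ∑ j ∈ Finset.range (m - 1),
      (tN (j+1) - tN j) *
        |(if tN (j+1) ≤ a then (1:ℝ) else 0) - (if tN (j+1) ≤ b then (1:ℝ) else 0)| := by
  rcases le_total b a with h | h
  · rw [abs_of_nonneg (by linarith)]
    exact aux_ptwise_half tN m hmono ha hb h
  · rw [abs_of_nonpos (by linarith), neg_sub,
      aux_ptwise_half tN m hmono hb ha h]
    exact Finset.sum_congr rfl fun j _ => by rw [abs_sub_comm]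

private lemma mem_eB {V : Type*} {G : SimpleGraph V} (A : Set V) {u w : V} (h : G.Adj u w) :
    s(u,w) ∈ edgeBoundary G A ↔ (u ∈ A ∧ w ∉ A) ∨ (w ∈ A ∧ u ∉ A) := by
  constructor
  · rintro ⟨-, u', w', he, hu', hw'⟩
    rw [Sym2.eq_iff] at he
    rcases he with ⟨rfl, rfl⟩ | ⟨rfl, rfl⟩
    · exact Or.inl ⟨hu', hw'⟩
    · exact Or.inr ⟨hu', hw'⟩
  · rintro (⟨h1, h2⟩ | ⟨h1, h2⟩)
    · exact ⟨G.mem_edgeSet.mpr h, u, w, rfl, h1, h2⟩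
    · exact ⟨G.mem_edgeSet.mpr h, w, u, Sym2.eq_swap.symm, h1, h2⟩

private lemma lower_eq_Iio {K : Set ℕ} (hK : K.Finite)
    (hlow : ∀ a b : ℕ, a ≤ b → b ∈ K → a ∈ K) : K = Set.Iio K.ncard := by
  ext k
  simp only [Set.mem_Iio]
  constructor
  · intro hk
    have hsub : Set.Iic k ⊆ K := fun j hj => hlow j k hj hk
    have h1 : (Set.Iic k).ncard ≤ K.ncard := Set.ncard_le_ncard hsub hK
    have h2 : (Set.Iic k).ncard = k + 1 := by
      rw [← Finset.coe_Iic, Set.ncard_coe_finset, Nat.card_Iic]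
    omega
  · intro hk
    by_contra hkK
    have hsub : K ⊆ Set.Iio k := by
      intro n hn
      simp only [Set.mem_Iio]
      by_contra h'
      push_neg at h'
      exact hkK (hlow k n h' hn)
    have h1 : K.ncard ≤ (Set.Iio k).ncard := Set.ncard_le_ncard hsub (Set.finite_Iio k)
    have h2 : (Set.Iio k).ncard = k := by
      rw [← Finset.coe_Iio, Set.ncard_coe_finset, Nat.card_Iio]
    omega

private lemma grad_sum_eq {V : Type*} (G : SimpleGraph V)
    (hloc : ∀ a : V, (G.neighborSet a).Finite)
    (g : V → ℝ) (hg : (Function.support g).Finite)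
    (tN : ℕ → ℝ) (m : ℕ)
    (hmono : ∀ ⦃i j : ℕ⦄, i < j → j < m → tN i < tN j)
    (hval : ∀ x : V, ∃ i, i < m ∧ tN i = g x) :
    gradL1 G g = ∑ j ∈ Finset.range (m - 1),
      (tN (j+1) - tN j) * ((edgeBoundary G {x | tN (j+1) ≤ g x}).ncard : ℝ) := by
  classical
  set F : G.edgeSet → ℝ := fun e =>
    Sym2.lift ⟨fun u w => |g u - g w|, fun u w => by dsimp only; rw [abs_sub_comm]⟩ e.1 with hF
  have hEfin : (⋃ x ∈ Function.support g, (fun y => s(x, y)) '' G.neighborSet x).Finite :=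
    hg.biUnion fun x _ => ((hloc x).image _)
  have hFsupp : (Function.support F).Finite := by
    apply Set.Finite.subset (hEfin.preimage (Subtype.val_injective.injOn))
    rintro ⟨e1, he⟩ hFe
    revert he hFe
    induction e1 using Sym2.ind with
    | _ u w =>
      intro he hFe
      simp only [hF, Function.mem_support, Sym2.lift_mk] at hFe
      have hne : g u ≠ g w := fun h => hFe (by rw [h, sub_self, abs_zero])
      have hadj : G.Adj u w := G.mem_edgeSet.mp he
      simp only [Set.mem_preimage, Set.mem_iUnion, Set.mem_image]
      rcases ne_or_eq (g u) 0 with h0 | h0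
      · exact ⟨u, h0, w, hadj, rfl⟩
      · have h0w : g w ≠ 0 := by rw [h0] at hne; exact fun h => hne h.symm
        exact ⟨w, h0w, u, hadj.symm, Sym2.eq_swap⟩
  have hgrad : gradL1 G g = ∑ e ∈ hFsupp.toFinset, F e := by
    exact tsum_eq_sum fun b hb =>
      Function.notMem_support.mp (fun hc => hb (hFsupp.mem_toFinset.mpr hc))
  rw [hgrad]
  have hedge : ∀ e ∈ hFsupp.toFinset, F e = ∑ j ∈ Finset.range (m-1),
      (tN (j+1) - tN j) *
        (if e.1 ∈ edgeBoundary G {x | tN (j+1) ≤ g x} then (1:ℝ) else 0) := by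
    rintro ⟨e1, he⟩ -
    revert he
    induction e1 using Sym2.ind with
    | _ u w =>
      intro he
      have hadj : G.Adj u w := G.mem_edgeSet.mp he
      have hlift : F ⟨s(u,w), he⟩ = |g u - g w| := by simp [hF]
      rw [hlift, aux_ptwise tN m hmono (hval u) (hval w)]
      refine Finset.sum_congr rfl fun j _ => ?_
      congr 1
      have hb := mem_eB (G := G) {x | tN (j+1) ≤ g x} hadj
      by_cases hu : tN (j+1) ≤ g u <;> by_cases hw : tN (j+1) ≤ g w <;>
        simp [hu, hw, hb, Set.mem_setOf_eq]
  rw [Finset.sum_congr rfl hedge, Finset.sum_comm]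
  refine Finset.sum_congr rfl fun j hj => ?_
  rw [← Finset.mul_sum]
  congr 1
  have hset : edgeBoundary G {x | tN (j+1) ≤ g x} =
      ↑((hFsupp.toFinset.filter
          (fun e => e.1 ∈ edgeBoundary G {x | tN (j+1) ≤ g x})).image Subtype.val) := by
    ext e
    simp only [Finset.coe_image, Set.mem_image, Finset.mem_coe, Finset.mem_filter]
    constructor
    · intro heB
      obtain ⟨hes, u, w, heq, hu, hw⟩ := heB
      subst heq
      have hne : F ⟨s(u,w), hes⟩ ≠ 0 := by
        simp only [hF, Sym2.lift_mk, abs_ne_zero, sub_ne_zero]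
        intro hc
        simp only [Set.mem_setOf_eq] at hu hw
        rw [hc] at hu
        exact hw hu
      exact ⟨⟨s(u,w), hes⟩, ⟨hFsupp.mem_toFinset.mpr hne, hes, u, w, rfl, hu, hw⟩, rfl⟩
    · rintro ⟨e', ⟨-, he'⟩, rfl⟩; exact he'
  rw [Finset.sum_boole]
  conv_rhs => rw [hset, Set.ncard_coe_finset,
    Finset.card_image_of_injective _ Subtype.val_injective]

/-- **$L^1$-Polya-Szegő.** If the enumeration `v` of the vertices of a
countably infinite locally finite graph satisfies
`#∂_E({v₁,…,v_N}) ≤ β + α·min{#∂_E(A) : #A = N}` for all `N`, then the associated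
rearrangement satisfies `‖∇f*‖_{L¹} ≤ α‖∇f‖_{L¹} + β‖f‖_{L^∞}`. -/
theorem polya_szego_L1 {V : Type*} (G : SimpleGraph V)
    (hloc : ∀ a : V, (G.neighborSet a).Finite)
    (v : ℕ → V) (hv : Function.Bijective v)
    (α β : ℝ) (hα : 1 ≤ α) (hβ : 0 ≤ β)
    (hiso : ∀ N : ℕ,
      ((edgeBoundary G (v '' Set.Iio N)).ncard : ℝ) ≤
        β + α * (sInf {k : ℕ | ∃ A : Set V,
          A.Finite ∧ A.ncard = N ∧ (edgeBoundary G A).ncard = k} : ℕ))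
    (f fstar : V → ℝ) (hsupp : (Function.support f).Finite) (hpos : ∀ x, 0 ≤ f x)
    (hre : IsRearrangement v f fstar) :
    gradL1 G fstar ≤ α * gradL1 G f + β * ⨆ x : V, |f x| := by
  classical
  obtain ⟨⟨σ, hσ⟩, hmon⟩ := hre
  have hsuppstar : (Function.support fstar).Finite := by
    rw [hσ, Function.support_comp_eq_preimage]
    exact hsupp.preimage (σ.injective.injOn)
  set T : Finset ℝ := insert (0:ℝ) (hsupp.toFinset.image f) with hT
  set m : ℕ := T.card with hm
  have hm1 : 1 ≤ m := Finset.card_pos.mpr ⟨0, Finset.mem_insert_self _ _⟩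
  set o := T.orderIsoOfFin rfl with ho
  set tN : ℕ → ℝ := fun j => if h : j < m then (o ⟨j, h⟩ : ℝ) else 0 with htN
  have hmono : ∀ ⦃i j : ℕ⦄, i < j → j < m → tN i < tN j := by
    intro i j hij hj
    have hi : i < m := hij.trans hj
    simp only [htN, dif_pos hi, dif_pos hj]
    exact_mod_cast o.strictMono (show (⟨i, hi⟩ : Fin m) < ⟨j, hj⟩ from hij)
  have hmem : ∀ j, j < m → tN j ∈ T := fun j h => by
    simp only [htN, dif_pos h]; exact (o ⟨j, h⟩).2
  have hsurj : ∀ a ∈ T, ∃ i, i < m ∧ tN i = a := by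
    intro a ha
    refine ⟨(o.symm ⟨a, ha⟩ : Fin m), (o.symm ⟨a, ha⟩).2, ?_⟩
    simp only [htN, dif_pos (o.symm ⟨a, ha⟩).2, Fin.eta, OrderIso.apply_symm_apply]
    exact dif_pos (o.symm ⟨a, ha⟩).2
  have hvalT : ∀ x, f x ∈ T := by
    intro x
    by_cases hx : x ∈ Function.support f
    · exact Finset.mem_insert_of_mem (Finset.mem_image.mpr ⟨x, hsupp.mem_toFinset.mpr hx, rfl⟩)
    · simp only [Function.mem_support, not_not] at hx
      rw [hx]; exact Finset.mem_insert_self _ _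
  have hvalf : ∀ x, ∃ i, i < m ∧ tN i = f x := fun x => hsurj _ (hvalT x)
  have hvalfs : ∀ x, ∃ i, i < m ∧ tN i = fstar x := fun x => by
    simp only [hσ, Function.comp_apply]; exact hvalf (σ x)
  have htN0 : tN 0 = 0 := by
    obtain ⟨i, hi, hti⟩ := hsurj 0 (Finset.mem_insert_self _ _)
    have h1 : tN 0 ≤ 0 := by
      rcases Nat.eq_zero_or_pos i with rfl | hposn
      · exact hti.le
      · exact hti ▸ (hmono hposn hi).le
    have h2 : 0 ≤ tN 0 := by
      have hmem0 := hmem 0 hm1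
      rcases Finset.mem_insert.mp hmem0 with h | h
      · exact h.ge
      · obtain ⟨x, -, hx⟩ := Finset.mem_image.mp h
        exact hx ▸ hpos x
    linarith
  rw [grad_sum_eq G hloc f hsupp tN m hmono hvalf,
      grad_sum_eq G hloc fstar hsuppstar tN m hmono hvalfs]
  have key : ∀ j ∈ Finset.range (m-1),
      ((edgeBoundary G {x | tN (j+1) ≤ fstar x}).ncard : ℝ) ≤
        β + α * ((edgeBoundary G {x | tN (j+1) ≤ f x}).ncard : ℝ) := by
    intro j hj
    have hj1 : j + 1 < m := by have := Finset.mem_range.mp hj; omega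
    have htpos : 0 < tN (j+1) := htN0 ▸ hmono (Nat.succ_pos j) hj1
    set A : Set V := {x | tN (j+1) ≤ f x} with hA
    have hAfin : A.Finite := by
      refine hsupp.subset fun x hx => ?_
      simp only [hA, Set.mem_setOf_eq] at hx
      simp only [Function.mem_support]
      intro h0
      rw [h0] at hx
      linarith
    set N := A.ncard with hN
    have hAstar : {x | tN (j+1) ≤ fstar x} = σ ⁻¹' A := by
      ext x; simp [hσ, hA]
    have hpreim : σ ⁻¹' A = (σ.symm : Equiv.Perm V) '' A := by
      rw [Equiv.image_eq_preimage_symm, Equiv.symm_symm]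
    have hAsfin : ({x | tN (j+1) ≤ fstar x}).Finite := by
      rw [hAstar, hpreim]; exact hAfin.image _
    have hAscard : ({x | tN (j+1) ≤ fstar x}).ncard = N := by
      rw [hAstar, hpreim, Set.ncard_image_of_injective _ (σ.symm.injective)]
    set K : Set ℕ := v ⁻¹' {x | tN (j+1) ≤ fstar x} with hK
    have hKfin : K.Finite := hAsfin.preimage (hv.1.injOn)
    have himg : v '' K = {x | tN (j+1) ≤ fstar x} := Set.image_preimage_eq _ hv.2
    have hKcard : K.ncard = N := by
      rw [← hAscard, ← himg, Set.ncard_image_of_injective _ hv.1]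
    have hKlow : ∀ a b : ℕ, a ≤ b → b ∈ K → a ∈ K := by
      intro a b hab hb
      simp only [hK, Set.mem_preimage, Set.mem_setOf_eq] at hb ⊢
      exact le_trans hb (hmon a b hab)
    have hKIio : K = Set.Iio N := by
      have := lower_eq_Iio hKfin hKlow
      rwa [hKcard] at this
    have himg2 : {x | tN (j+1) ≤ fstar x} = v '' Set.Iio N := by rw [← himg, hKIio]
    rw [himg2]
    refine le_trans (hiso N) ?_
    have hmemS : (edgeBoundary G A).ncard ∈ {k : ℕ | ∃ B : Set V,
        B.Finite ∧ B.ncard = N ∧ (edgeBoundary G B).ncard = k} := ⟨A, hAfin, rfl, rfl⟩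
    have hle := Nat.sInf_le hmemS
    have hα0 : (0:ℝ) ≤ α := le_trans zero_le_one hα
    have hle' : ((sInf {k : ℕ | ∃ B : Set V,
        B.Finite ∧ B.ncard = N ∧ (edgeBoundary G B).ncard = k} : ℕ) : ℝ)
        ≤ ((edgeBoundary G A).ncard : ℝ) := Nat.cast_le.mpr hle
    nlinarith [mul_le_mul_of_nonneg_left hle' hα0]
  have hsum1 : ∑ j ∈ Finset.range (m-1),
      (tN (j+1) - tN j) * ((edgeBoundary G {x | tN (j+1) ≤ fstar x}).ncard : ℝ)
      ≤ ∑ j ∈ Finset.range (m-1),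
      (tN (j+1) - tN j) * (β + α * ((edgeBoundary G {x | tN (j+1) ≤ f x}).ncard : ℝ)) := by
    refine Finset.sum_le_sum fun j hj => ?_
    have hj1 : j + 1 < m := by have := Finset.mem_range.mp hj; omega
    have hgap : 0 ≤ tN (j+1) - tN j := by
      have := hmono (Nat.lt_succ_self j) hj1; linarith
    exact mul_le_mul_of_nonneg_left (key j hj) hgap
  refine le_trans hsum1 ?_
  have hexp : ∑ j ∈ Finset.range (m-1),
      (tN (j+1) - tN j) * (β + α * ((edgeBoundary G {x | tN (j+1) ≤ f x}).ncard : ℝ))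
      = β * (tN (m-1) - tN 0) +
        α * ∑ j ∈ Finset.range (m-1),
          (tN (j+1) - tN j) * ((edgeBoundary G {x | tN (j+1) ≤ f x}).ncard : ℝ) := by
    rw [← Finset.sum_range_sub tN (m-1), Finset.mul_sum, Finset.mul_sum,
      ← Finset.sum_add_distrib]
    exact Finset.sum_congr rfl fun j _ => by ring
  rw [hexp, htN0, sub_zero]
  have hbdd : BddAbove (Set.range fun x : V => |f x|) := by
    refine BddAbove.mono ?_ T.finite_toSet.bddAbove
    rintro y ⟨x, rfl⟩
    simp only [Finset.mem_coe]
    rw [abs_of_nonneg (hpos x)]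
    exact hvalT x
  have htop : tN (m-1) ≤ ⨆ x : V, |f x| := by
    have hm' : m - 1 < m := by omega
    rcases Finset.mem_insert.mp (hmem (m-1) hm') with h | h
    · rw [h]
      exact le_trans (abs_nonneg (f (v 0))) (le_ciSup hbdd (v 0))
    · obtain ⟨x, -, hx⟩ := Finset.mem_image.mp h
      calc tN (m-1) = |f x| := by rw [← hx, abs_of_nonneg (hpos x)]
        _ ≤ _ := le_ciSup hbdd x
  have := mul_le_mul_of_nonneg_left htop hβ
  linarith
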